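/- Let w be a binary word of length n, m a positive integer, and suppose every word x_{i+1}...x_{i+m} of length m occurring in w at two starting positions at distance k apart (with i+k+m ≤ n, k ≥ 1) satisfies k ≥ m³/Λ(w), where Λ(w) = max{|η|²(ℓ+1)³ : η^ℓ ≺ w}. Then for every ξ ∈ {0,1}^m, |w|_ξ ≤ n·Λ(w)/m³, and hence Σ_{ξ∈{0,1}^m} |w|_ξ² ≤ n²Λ(w)/m³. -/

import Mathlib

open Filter

/-- Number of occurrences of `ξ` as a factor of `w` (occurrence at position `i`
means `ξ = w_{i+1}...w_{i+|ξ|}`). -/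
def occ (w ξ : List Bool) : ℕ :=
  ((List.range w.length).filter (fun i => ξ.isPrefixOf (w.drop i))).length

/-- `ℓ`-fold concatenation `η^ℓ` of the word `η`. -/
def wpow (η : List Bool) (ℓ : ℕ) : List Bool := (List.replicate ℓ η).flatten

/-- The Kamae–Xue complexity `Σ(w) = Σ_{ξ ∈ {0,1}^+} |w|_ξ²`.  Since only
factors of `w` contribute nonzero terms, the sum is taken over the (finite) set
of nonempty sublists of `w`, which contains all factors of `w`. -/
def kxSum (w : List Bool) : ℕ :=
  ∑ ξ ∈ w.sublists.toFinset.filter (fun ξ => ξ ≠ []), (occ w ξ) ^ 2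

/-- `Λ(w) = max{|η|²(ℓ+1)³ : η nonempty, ℓ ≥ 1, η^ℓ a factor of w}`. -/
noncomputable def Lam (w : List Bool) : ℕ :=
  sSup {m | ∃ η ℓ, η ≠ ([] : List Bool) ∧ 1 ≤ ℓ ∧ wpow η ℓ <:+: w ∧
    m = η.length ^ 2 * (ℓ + 1) ^ 3}

/-- A nonempty word is prime (primitive) if it is not a proper power. -/
def IsPrimeWord (η : List Bool) : Prop :=
  η ≠ [] ∧ ∀ ζ ℓ, 2 ≤ ℓ → η ≠ wpow ζ ℓ

/-- `|v|_{ξ,m}`: occurrences of `ξ` in `v` ending in the last `m` positions. -/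
def occEnd (v ξ : List Bool) (m : ℕ) : ℕ :=
  ((List.range v.length).filter
    (fun i => ξ.isPrefixOf (v.drop i) && decide (v.length < i + ξ.length + m))).length

/-- The prefix `x_1 x_2 ⋯ x_n` of the infinite sequence `x`. -/
def pref (x : ℕ → Bool) (n : ℕ) : List Bool := (List.range n).map x
section Aux

/-- occ as a Finset card. -/
lemma occ_eq_card (w ξ : List Bool) :
    occ w ξ = ((Finset.range w.length).filter (fun i => ξ.isPrefixOf (w.drop i))).card := by
  simp only [occ, Finset.filter, Finset.range, Multiset.range, Finset.card]
  congr 1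
  apply List.filter_congr
  intro i _
  rw [Bool.eq_iff_iff]
  simp [List.isPrefixOf_iff_prefix]

lemma wpow_len (η : List Bool) (ℓ : ℕ) : (wpow η ℓ).length = ℓ * η.length := by
  simp [wpow]

lemma lam_lower (w ξ : List Bool) (hξ : ξ ≠ []) (hinf : ξ <:+: w) :
    ξ.length ^ 2 ≤ Lam w := by
  set S := {m | ∃ η ℓ, η ≠ ([] : List Bool) ∧ 1 ≤ ℓ ∧ wpow η ℓ <:+: w ∧
    m = η.length ^ 2 * (ℓ + 1) ^ 3} with hS
  have hmem : ξ.length ^ 2 * (1 + 1) ^ 3 ∈ S :=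
    ⟨ξ, 1, hξ, le_refl 1, by simpa [wpow] using hinf, rfl⟩
  have hbdd : BddAbove S := by
    refine ⟨w.length ^ 2 * (w.length + 1) ^ 3, ?_⟩
    rintro x ⟨η, ℓ, hη, hℓ, hif, rfl⟩
    have h1 : 1 ≤ η.length := List.length_pos_iff.mpr hη
    have hlen : ℓ * η.length ≤ w.length := by
      have := hif.length_le
      rwa [wpow_len] at this
    have hη2 : η.length ≤ w.length := le_trans (Nat.le_mul_of_pos_left _ hℓ) hlen
    have hℓ2 : ℓ ≤ w.length := le_trans (Nat.le_mul_of_pos_right _ h1) hlen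
    exact Nat.mul_le_mul (Nat.pow_le_pow_left hη2 2) (Nat.pow_le_pow_left (by omega) 3)
  have := le_csSup hbdd hmem
  have h8 : ξ.length ^ 2 ≤ ξ.length ^ 2 * (1 + 1) ^ 3 := Nat.le_mul_of_pos_right _ (by norm_num)
  exact le_trans h8 this

/-- abstract counting lemma -/
lemma count_key (m Λ : ℕ) (hm : 1 ≤ m) (hΛ : m ^ 2 ≤ Λ) :
    ∀ N (P : Finset ℕ) (n : ℕ), P.card ≤ N →
      (∀ i ∈ P, i + m ≤ n) →
      (∀ i ∈ P, ∀ j ∈ P, i < j → m ^ 3 ≤ (j - i) * Λ) →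
      P.card * m ^ 3 ≤ n * Λ := by
  intro N
  induction N with
  | zero =>
    intro P n hc _ _
    simp [Nat.le_zero.mp hc]
  | succ N ih =>
    intro P n hc hbound hgap
    rcases P.eq_empty_or_nonempty with rfl | hne
    · simp
    set M := P.max' hne with hMdef
    have hM : M ∈ P := P.max'_mem hne
    have hMn : M + m ≤ n := hbound M hM
    have hmn : m ≤ n := by omega
    rcases (P.erase M).eq_empty_or_nonempty with h' | hne'
    · have hPcard : P.card = 1 := by
        have h1 := Finset.card_erase_of_mem hM
        rw [h', Finset.card_empty] at h1
        have hpos : 0 < P.card := Finset.card_pos.mpr hne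
        omega
      rw [hPcard]
      calc 1 * m ^ 3 = m * m ^ 2 := by ring
        _ ≤ n * Λ := Nat.mul_le_mul hmn hΛ
    · set M' := (P.erase M).max' hne' with hM'def
      have hM'e : M' ∈ P.erase M := (P.erase M).max'_mem hne'
      have hM'P : M' ∈ P := Finset.mem_of_mem_erase hM'e
      have hlt : M' < M := by
        have h1 := Finset.le_max' P M' hM'P
        have h2 : M' ≠ M := (Finset.mem_erase.mp hM'e).1
        omega
      have hgapMM := hgap M' hM'P M hM hlt
      have hcard' : (P.erase M).card ≤ N := by
        have := Finset.card_erase_of_mem hM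
        omega
      have hrec := ih (P.erase M) (M' + m) hcard'
        (fun i hi => by
          have : i ≤ M' := Finset.le_max' _ i hi
          omega)
        (fun i hi j hj hij =>
          hgap i (Finset.mem_of_mem_erase hi) j (Finset.mem_of_mem_erase hj) hij)
      have hcard : P.card = (P.erase M).card + 1 := by
        have := Finset.card_erase_of_mem hM
        have hpos : 1 ≤ P.card := Finset.card_pos.mpr hne
        omega
      calc P.card * m ^ 3 = (P.erase M).card * m ^ 3 + m ^ 3 := by rw [hcard]; ring
        _ ≤ (M' + m) * Λ + (M - M') * Λ := Nat.add_le_add hrec hgapMM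
        _ = (M' + m + (M - M')) * Λ := by ring
        _ ≤ n * Λ := Nat.mul_le_mul_right _ (by omega)

end Aux

theorem occ_le_of_repetition_gap' (w : List Bool) (m : ℕ) (hm : 1 ≤ m)
    (h : ∀ i k, 1 ≤ k → i + k + m ≤ w.length →
      (w.drop i).take m = (w.drop (i + k)).take m → m ^ 3 ≤ k * Lam w) :
    (∀ ξ : List Bool, ξ.length = m → occ w ξ * m ^ 3 ≤ w.length * Lam w) ∧
    (∑ ξ ∈ w.sublists.toFinset.filter (fun ξ => ξ.length = m), (occ w ξ) ^ 2) * m ^ 3 ≤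
      w.length ^ 2 * Lam w := by
  set n := w.length with hn
  -- occurrence facts
  have hfact : ∀ ξ : List Bool, ξ.length = m → ∀ i,
      i ∈ (Finset.range n).filter (fun i => ξ.isPrefixOf (w.drop i)) →
      i + m ≤ n ∧ (w.drop i).take m = ξ := by
    intro ξ hξ i hi
    obtain ⟨hir, hp⟩ := Finset.mem_filter.mp hi
    have hpre : ξ <+: w.drop i := List.isPrefixOf_iff_prefix.mp hp
    have h1 : ξ.length ≤ (w.drop i).length := hpre.length_le
    rw [List.length_drop] at h1
    have hir' : i < n := Finset.mem_range.mp hir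
    refine ⟨by omega, ?_⟩
    have := List.prefix_iff_eq_take.mp hpre
    rw [hξ] at this
    exact this.symm
  have part1 : ∀ ξ : List Bool, ξ.length = m → occ w ξ * m ^ 3 ≤ n * Lam w := by
    intro ξ hξ
    rw [occ_eq_card]
    set P := (Finset.range n).filter (fun i => ξ.isPrefixOf (w.drop i)) with hP
    rcases P.eq_empty_or_nonempty with h0 | ⟨i0, hi0⟩
    · rw [h0]; simp
    · -- ξ is a factor of w, so Lam w ≥ m²
      have hξne : ξ ≠ [] := by
        intro hc; rw [hc] at hξ; simp at hξ; omega
      have hinf : ξ <:+: w := by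
        have hp := (Finset.mem_filter.mp hi0).2
        have hpre : ξ <+: w.drop i0 := List.isPrefixOf_iff_prefix.mp hp
        exact hpre.isInfix.trans (w.drop_suffix i0).isInfix
      have hΛ : m ^ 2 ≤ Lam w := by
        have := lam_lower w ξ hξne hinf
        rwa [hξ] at this
      refine count_key m (Lam w) hm hΛ P.card P n le_rfl
        (fun i hi => (hfact ξ hξ i hi).1) ?_
      intro i hi j hj hij
      have h1 := hfact ξ hξ i hi
      have h2 := hfact ξ hξ j hj
      have hk : i + (j - i) = j := by omega
      have := h i (j - i) (by omega) (by omega)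
        (by rw [hk, h1.2, h2.2])
      exact this
  refine ⟨part1, ?_⟩
  set T := w.sublists.toFinset.filter (fun ξ => ξ.length = m) with hT
  -- sum of occurrences over T is at most n
  have hsum : (∑ ξ ∈ T, occ w ξ) ≤ n := by
    have hre : (∑ ξ ∈ T, occ w ξ)
        = ∑ ξ ∈ T, ((Finset.range n).filter (fun i => ξ.isPrefixOf (w.drop i))).card := by
      apply Finset.sum_congr rfl
      intro ξ _; exact occ_eq_card w ξ
    rw [hre]
    have hdisj : ∀ ξ ∈ T, ∀ ξ' ∈ T, ξ ≠ ξ' →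
        Disjoint ((Finset.range n).filter (fun i => ξ.isPrefixOf (w.drop i)))
          ((Finset.range n).filter (fun i => ξ'.isPrefixOf (w.drop i))) := by
      intro ξ hξT ξ' hξ'T hne
      rw [Finset.disjoint_left]
      intro i hi hi'
      have hlξ : ξ.length = m := (Finset.mem_filter.mp hξT).2
      have hlξ' : ξ'.length = m := (Finset.mem_filter.mp hξ'T).2
      have e1 := (hfact ξ hlξ i hi).2
      have e2 := (hfact ξ' hlξ' i hi').2
      exact hne (e1.symm.trans e2)
    calc (∑ ξ ∈ T, ((Finset.range n).filter (fun i => ξ.isPrefixOf (w.drop i))).card)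
        = (T.biUnion (fun ξ => (Finset.range n).filter (fun i => ξ.isPrefixOf (w.drop i)))).card :=
          (Finset.card_biUnion hdisj).symm
      _ ≤ (Finset.range n).card := Finset.card_le_card (by
          intro i hi
          obtain ⟨ξ, _, hiξ⟩ := Finset.mem_biUnion.mp hi
          exact (Finset.mem_filter.mp hiξ).1)
      _ = n := Finset.card_range n
  calc (∑ ξ ∈ T, (occ w ξ) ^ 2) * m ^ 3
      = ∑ ξ ∈ T, occ w ξ * (occ w ξ * m ^ 3) := by
        rw [Finset.sum_mul]; apply Finset.sum_congr rfl; intro ξ _; ring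
    _ ≤ ∑ ξ ∈ T, occ w ξ * (n * Lam w) := by
        apply Finset.sum_le_sum
        intro ξ hξT
        exact Nat.mul_le_mul_left _ (part1 ξ (Finset.mem_filter.mp hξT).2)
    _ = (∑ ξ ∈ T, occ w ξ) * (n * Lam w) := (Finset.sum_mul _ _ _).symm
    _ ≤ n * (n * Lam w) := Nat.mul_le_mul_right _ hsum
    _ = n ^ 2 * Lam w := by ring

/-- if every length-`m` word occurring in `w` at two positions at
distance `k` satisfies `k ≥ m³/Λ(w)`, then `|w|_ξ ≤ nΛ(w)/m³` for every
`ξ ∈ {0,1}^m`, and hence `Σ_{ξ∈{0,1}^m} |w|_ξ² ≤ n²Λ(w)/m³`. -/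
theorem occ_le_of_repetition_gap (w : List Bool) (m : ℕ) (hm : 1 ≤ m)
    (h : ∀ i k, 1 ≤ k → i + k + m ≤ w.length →
      (w.drop i).take m = (w.drop (i + k)).take m → m ^ 3 ≤ k * Lam w) :
    (∀ ξ : List Bool, ξ.length = m → occ w ξ * m ^ 3 ≤ w.length * Lam w) ∧
    (∑ ξ ∈ w.sublists.toFinset.filter (fun ξ => ξ.length = m), (occ w ξ) ^ 2) * m ^ 3 ≤
      w.length ^ 2 * Lam w := occ_le_of_repetition_gap' w m hm h
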